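/- Fix integers 0 ≤ r ≤ R and a real number θ. Suppose u is r + 1 times continuously differentiable on an open interval containing x̄. For h > 0 let x_j = x̄ + j·h (j = 0, …, R), let p_h be the unique polynomial of degree at most r minimizing Σ_{i=0}^{R} (q(x_i) − u(x_i))² over polynomials q of degree at most r, and let x_* = x̄ + θ·h. Then there exist constants C > 0 and h₀ > 0 such that |p_h(x_*) − u(x_*)| ≤ C h^{r+1} for all 0 < h < h₀. -/
import Mathlib


open Finset

/-- The equispaced stencil node `x_j = x̄ + j·h` (here `xb` denotes `x̄`). -/
noncomputable def stencil (xb h : ℝ) (j : ℕ) : ℝ := xb + j * h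

/-- `IsLSQFit r R x u p` says that `p` is a polynomial of degree at most `r`
minimizing the least-squares functional `∑_{i=0}^{R} (q(x_i) − u(x_i))²` among all
polynomials `q` of degree at most `r`. -/
def IsLSQFit (r R : ℕ) (x : ℕ → ℝ) (u : ℝ → ℝ) (p : Polynomial ℝ) : Prop :=
  p.natDegree ≤ r ∧
    ∀ q : Polynomial ℝ, q.natDegree ≤ r →
      ∑ i ∈ Finset.range (R + 1), (p.eval (x i) - u (x i)) ^ 2 ≤
        ∑ i ∈ Finset.range (R + 1), (q.eval (x i) - u (x i)) ^ 2

noncomputable def LebConst (r : ℕ) (θ : ℝ) : ℝ :=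
  ∑ i ∈ Finset.range (r + 1),
    ∏ k ∈ (Finset.range (r + 1)).erase i, (|θ - (k : ℝ)| * |(i : ℝ) - (k : ℝ)|⁻¹)

lemma LebConst_nonneg (r : ℕ) (θ : ℝ) : 0 ≤ LebConst r θ :=
  Finset.sum_nonneg fun i _ => Finset.prod_nonneg fun k _ => by positivity

/-- Lagrange stability on the scaled stencil. -/
lemma lagrange_stencil_bound (r : ℕ) (θ xb h B : ℝ) (hh : 0 < h) (hB : 0 ≤ B)
    (v : Polynomial ℝ) (hvdeg : v.natDegree ≤ r)
    (hvb : ∀ j ∈ Finset.range (r + 1), |v.eval (stencil xb h j)| ≤ B) :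
    |v.eval (xb + θ * h)| ≤ LebConst r θ * B := by
  have hinj : Set.InjOn (stencil xb h) (Finset.range (r + 1)) := by
    intro i _ j _ hij
    unfold stencil at hij
    have hcast : (i : ℝ) = (j : ℝ) :=
      mul_right_cancel₀ (ne_of_gt hh) (by linarith : (i : ℝ) * h = (j : ℝ) * h)
    exact_mod_cast hcast
  have hvdeg' : v.degree < (#(Finset.range (r + 1)) : ℕ) := by
    rw [Finset.card_range]
    calc v.degree ≤ (v.natDegree : WithBot ℕ) := Polynomial.degree_le_natDegree
      _ ≤ (r : WithBot ℕ) := by exact_mod_cast hvdeg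
      _ < ((r + 1 : ℕ) : WithBot ℕ) := by exact_mod_cast lt_add_one r
  have hinterp := Lagrange.eq_interpolate hinj hvdeg'
  have hveval : v.eval (xb + θ * h) = ∑ i ∈ Finset.range (r + 1), v.eval (stencil xb h i) *
      (Lagrange.basis (Finset.range (r + 1)) (stencil xb h) i).eval (xb + θ * h) := by
    conv_lhs => rw [hinterp]
    rw [Lagrange.interpolate_apply, Polynomial.eval_finset_sum]
    apply Finset.sum_congr rfl
    intro i _
    rw [Polynomial.eval_mul, Polynomial.eval_C]
  have hbasis : ∀ i ∈ Finset.range (r + 1),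
      |(Lagrange.basis (Finset.range (r + 1)) (stencil xb h) i).eval (xb + θ * h)|
      = ∏ k ∈ (Finset.range (r + 1)).erase i, (|θ - (k : ℝ)| * |(i : ℝ) - (k : ℝ)|⁻¹) := by
    intro i _
    rw [Lagrange.basis, Polynomial.eval_prod, Finset.abs_prod]
    apply Finset.prod_congr rfl
    intro k _
    have hne : h ≠ 0 := ne_of_gt hh
    have heval : (Lagrange.basisDivisor (stencil xb h i) (stencil xb h k)).eval (xb + θ * h)
        = (θ - (k : ℝ)) * ((i : ℝ) - (k : ℝ))⁻¹ := by
      rw [Lagrange.basisDivisor]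
      simp only [Polynomial.eval_mul, Polynomial.eval_C, Polynomial.eval_sub, Polynomial.eval_X]
      have e1 : stencil xb h i - stencil xb h k = ((i : ℝ) - (k : ℝ)) * h := by
        unfold stencil; ring
      have e2 : (xb + θ * h) - stencil xb h k = (θ - (k : ℝ)) * h := by
        unfold stencil; ring
      rw [e1, e2, mul_inv]
      calc (((i : ℝ) - (k : ℝ))⁻¹ * h⁻¹) * ((θ - (k : ℝ)) * h)
          = ((θ - (k : ℝ)) * ((i : ℝ) - (k : ℝ))⁻¹) * (h⁻¹ * h) := by ring
        _ = (θ - (k : ℝ)) * ((i : ℝ) - (k : ℝ))⁻¹ := by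
            rw [inv_mul_cancel₀ hne, mul_one]
    rw [heval, abs_mul, abs_inv]
  rw [hveval]
  calc |∑ i ∈ Finset.range (r + 1), v.eval (stencil xb h i) *
          (Lagrange.basis (Finset.range (r + 1)) (stencil xb h) i).eval (xb + θ * h)|
      ≤ ∑ i ∈ Finset.range (r + 1), |v.eval (stencil xb h i) *
          (Lagrange.basis (Finset.range (r + 1)) (stencil xb h) i).eval (xb + θ * h)| :=
        Finset.abs_sum_le_sum_abs _ _
    _ ≤ ∑ i ∈ Finset.range (r + 1), B *
          (∏ k ∈ (Finset.range (r + 1)).erase i, (|θ - (k : ℝ)| * |(i : ℝ) - (k : ℝ)|⁻¹)) := by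
        apply Finset.sum_le_sum
        intro i hi
        rw [abs_mul, hbasis i hi]
        apply mul_le_mul_of_nonneg_right (hvb i hi)
        exact Finset.prod_nonneg fun k _ => by positivity
    _ = LebConst r θ * B := by rw [LebConst, Finset.sum_mul]; apply Finset.sum_congr rfl; intros; ring

/-- A Taylor polynomial with remainder bound, valid on `Icc c d` inside the smoothness region. -/
lemma taylor_poly_bound (r : ℕ) (u : ℝ → ℝ) (a b c d M : ℝ) (hcd : c < d)
    (hsub : Set.Icc c d ⊆ Set.Ioo a b) (hu : ContDiffOn ℝ (r + 1) u (Set.Ioo a b))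
    (hM : ∀ y ∈ Set.Icc c d, ‖iteratedDerivWithin (r + 1) u (Set.Ioo a b) y‖ ≤ M) :
    ∃ T : Polynomial ℝ, T.natDegree ≤ r ∧
      ∀ x ∈ Set.Icc c d, |u x - T.eval x| ≤ M * (x - c) ^ (r + 1) / (r.factorial : ℝ) := by
  have hderiv_eq : ∀ x ∈ Set.Icc c d,
      iteratedDerivWithin (r + 1) u (Set.Icc c d) x
        = iteratedDerivWithin (r + 1) u (Set.Ioo a b) x := by
    intro x hx
    have H := hu.ftaylorSeriesWithin isOpen_Ioo.uniqueDiffOn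
    have h1 := H.eq_iteratedFDerivWithin_of_uniqueDiffOn (m := r + 1) le_rfl
      isOpen_Ioo.uniqueDiffOn (hsub hx)
    have h2 := (H.mono hsub).eq_iteratedFDerivWithin_of_uniqueDiffOn (m := r + 1) le_rfl
      (uniqueDiffOn_Icc hcd) hx
    rw [iteratedDerivWithin_eq_iteratedFDerivWithin,
      iteratedDerivWithin_eq_iteratedFDerivWithin, ← h1, ← h2]
  have hC' : ∀ y ∈ Set.Icc c d,
      ‖iteratedDerivWithin (r + 1) u (Set.Icc c d) y‖ ≤ M := by
    intro y hy
    rw [hderiv_eq y hy]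
    exact hM y hy
  refine ⟨∑ k ∈ Finset.range (r + 1),
      Polynomial.C (iteratedDerivWithin k u (Set.Icc c d) c / (k.factorial : ℝ)) *
        (Polynomial.X - Polynomial.C c) ^ k, ?_, ?_⟩
  · apply Polynomial.natDegree_sum_le_of_forall_le
    intro k hk
    have hk' : k ≤ r := Nat.lt_succ_iff.mp (Finset.mem_range.mp hk)
    calc (Polynomial.C (iteratedDerivWithin k u (Set.Icc c d) c / (k.factorial : ℝ)) *
        (Polynomial.X - Polynomial.C c) ^ k).natDegree
        ≤ _ + _ := Polynomial.natDegree_mul_le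
      _ ≤ r := by
          simp [Polynomial.natDegree_pow, Polynomial.natDegree_X_sub_C, hk']
  · intro x hx
    have hTeval : Polynomial.eval x (∑ k ∈ Finset.range (r + 1),
        Polynomial.C (iteratedDerivWithin k u (Set.Icc c d) c / (k.factorial : ℝ)) *
          (Polynomial.X - Polynomial.C c) ^ k) = taylorWithinEval u r (Set.Icc c d) c x := by
      rw [taylor_within_apply, Polynomial.eval_finset_sum]
      apply Finset.sum_congr rfl
      intro k _
      simp only [Polynomial.eval_mul, Polynomial.eval_C, Polynomial.eval_pow,
        Polynomial.eval_sub, Polynomial.eval_X, smul_eq_mul]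
      ring
    rw [hTeval]
    have hbd := taylor_mean_remainder_bound (le_of_lt hcd) (hu.mono hsub) hx hC'
    rwa [Real.norm_eq_abs] at hbd

/-- Nodal error bound for the least-squares fit, by comparison with `T`. -/
lemma lsq_nodal_bound (r R : ℕ) (x : ℕ → ℝ) (u : ℝ → ℝ) (p T : Polynomial ℝ) (E : ℝ)
    (hE : 0 ≤ E)
    (hpmin : ∑ i ∈ Finset.range (R + 1), (p.eval (x i) - u (x i)) ^ 2 ≤
        ∑ i ∈ Finset.range (R + 1), (T.eval (x i) - u (x i)) ^ 2)
    (hT : ∀ j ∈ Finset.range (R + 1), |T.eval (x j) - u (x j)| ≤ E) :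
    ∀ j ∈ Finset.range (R + 1), |p.eval (x j) - u (x j)| ≤ ((R : ℝ) + 1) * E := by
  intro j hj
  have hRnn : (0:ℝ) ≤ (R : ℝ) := Nat.cast_nonneg R
  have hrhs : ∑ i ∈ Finset.range (R + 1), (T.eval (x i) - u (x i)) ^ 2
      ≤ ((R : ℝ) + 1) * E ^ 2 := by
    calc ∑ i ∈ Finset.range (R + 1), (T.eval (x i) - u (x i)) ^ 2
        ≤ ∑ _i ∈ Finset.range (R + 1), E ^ 2 := by
          apply Finset.sum_le_sum
          intro i hi
          have hb1 := hT i hi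
          calc (T.eval (x i) - u (x i)) ^ 2
              = |T.eval (x i) - u (x i)| ^ 2 := (sq_abs _).symm
            _ ≤ E ^ 2 := by gcongr
      _ = ((R : ℝ) + 1) * E ^ 2 := by
          rw [Finset.sum_const, Finset.card_range]; push_cast; ring
  have hterm : (p.eval (x j) - u (x j)) ^ 2 ≤ ((R : ℝ) + 1) * E ^ 2 := by
    have hsingle : (p.eval (x j) - u (x j)) ^ 2 ≤
        ∑ i ∈ Finset.range (R + 1), (p.eval (x i) - u (x i)) ^ 2 :=
      Finset.single_le_sum (f := fun i => (p.eval (x i) - u (x i)) ^ 2)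
        (fun i _ => sq_nonneg _) hj
    linarith
  have hB : (0:ℝ) ≤ ((R : ℝ) + 1) * E := by positivity
  have hsq : (p.eval (x j) - u (x j)) ^ 2 ≤ (((R : ℝ) + 1) * E) ^ 2 := by
    nlinarith [sq_nonneg E]
  calc |p.eval (x j) - u (x j)|
      = Real.sqrt ((p.eval (x j) - u (x j)) ^ 2) := (Real.sqrt_sq_eq_abs _).symm
    _ ≤ Real.sqrt ((((R : ℝ) + 1) * E) ^ 2) := Real.sqrt_le_sqrt hsq
    _ = ((R : ℝ) + 1) * E := Real.sqrt_sq hB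



set_option maxHeartbeats 1000000 in
/-- if `u` is `r + 1` times continuously differentiable on an open
interval containing `x̄`, `p_h` is the degree-`r` least-squares fit of the nodal
values on the equispaced stencil `x_j = x̄ + j·h`, and `x_* = x̄ + θ·h`, then there
are `C > 0` and `h₀ > 0` with `|p_h(x_*) − u(x_*)| ≤ C h^{r+1}` for `0 < h < h₀`. -/
theorem least_squares_fit_accuracy (r R : ℕ) (hrR : r ≤ R) (θ : ℝ)
    (u : ℝ → ℝ) (xb a b : ℝ) (ha : a < xb) (hb : xb < b)
    (hu : ContDiffOn ℝ (r + 1) u (Set.Ioo a b)) :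
    ∃ C > 0, ∃ h₀ > 0, ∀ h, 0 < h → h < h₀ →
      ∀ p : Polynomial ℝ, IsLSQFit r R (stencil xb h) u p →
        |p.eval (xb + θ * h) - u (xb + θ * h)| ≤ C * h ^ (r + 1) := by
  classical
  have hθ1 : -|θ| ≤ θ := neg_abs_le θ
  have hθ2 : θ ≤ |θ| := le_abs_self θ
  have hθ0 : 0 ≤ |θ| := abs_nonneg θ
  have hRnn : (0:ℝ) ≤ (R : ℝ) := Nat.cast_nonneg R
  -- the big compact interval
  obtain ⟨D, hD_def⟩ : ∃ D : ℝ, D = min (xb - a) (b - xb) / 2 := ⟨_, rfl⟩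
  have hmin : 0 < min (xb - a) (b - xb) := lt_min (by linarith) (by linarith)
  have hD : 0 < D := by rw [hD_def]; linarith
  have hsubD : Set.Icc (xb - D) (xb + D) ⊆ Set.Ioo a b := by
    intro y hy
    have h1 : D < xb - a := by
      have := min_le_left (xb - a) (b - xb)
      rw [hD_def]; linarith
    have h2 : D < b - xb := by
      have := min_le_right (xb - a) (b - xb)
      rw [hD_def]; linarith
    obtain ⟨hy1, hy2⟩ := hy
    exact ⟨by linarith, by linarith⟩
  -- bound on the (r+1)-st derivative on the compact interval
  have hcontDeriv : ContinuousOn (iteratedDerivWithin (r + 1) u (Set.Ioo a b))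
      (Set.Icc (xb - D) (xb + D)) := by
    refine (hu.continuousOn_iteratedDerivWithin ?_ isOpen_Ioo.uniqueDiffOn).mono hsubD
    exact_mod_cast le_rfl
  obtain ⟨M₀, hM₀⟩ := (isCompact_Icc).exists_bound_of_continuousOn hcontDeriv
  obtain ⟨M, hM_def⟩ : ∃ M : ℝ, M = max M₀ 0 := ⟨_, rfl⟩
  have hM : 0 ≤ M := by rw [hM_def]; exact le_max_right _ _
  have hMb : ∀ y ∈ Set.Icc (xb - D) (xb + D),
      ‖iteratedDerivWithin (r + 1) u (Set.Ioo a b) y‖ ≤ M := by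
    intro y hy
    rw [hM_def]
    exact (hM₀ y hy).trans (le_max_left _ _)
  obtain ⟨K, hK_def⟩ : ∃ K : ℝ, K = (R : ℝ) + 2 * |θ| + 2 := ⟨_, rfl⟩
  have hK : 0 < K := by rw [hK_def]; positivity
  have hfac : (0:ℝ) < (r.factorial : ℝ) := by positivity
  obtain ⟨C, hC_def⟩ : ∃ C : ℝ,
      C = (LebConst r θ * ((R : ℝ) + 2) + 1) * (M * K ^ (r + 1) / (r.factorial : ℝ)) + 1 :=
    ⟨_, rfl⟩
  have hΛ : 0 ≤ LebConst r θ := LebConst_nonneg r θ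
  have hCoef : 0 ≤ (LebConst r θ * ((R : ℝ) + 2) + 1) *
      (M * K ^ (r + 1) / (r.factorial : ℝ)) := by
    apply mul_nonneg (by positivity)
    apply div_nonneg _ (by positivity)
    apply mul_nonneg hM (by positivity)
  have hCpos : 0 < C := by rw [hC_def]; linarith
  refine ⟨C, hCpos, D / K, div_pos hD hK, ?_⟩
  intro h hh hhK p hp
  have hKh : K * h < D := by
    have := (lt_div_iff₀ hK).mp hhK
    linarith
  have hKh' : ((R : ℝ) + 2 * |θ| + 2) * h < D := by rw [← hK_def]; exact hKh
  obtain ⟨c, hc_def⟩ : ∃ c : ℝ, c = xb - (|θ| + 1) * h := ⟨_, rfl⟩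
  obtain ⟨d, hd_def⟩ : ∃ d : ℝ, d = xb + ((R : ℝ) + |θ| + 1) * h := ⟨_, rfl⟩
  have hcd : c < d := by
    rw [hc_def, hd_def]
    have hx : 0 < ((R : ℝ) + 2 * |θ| + 2) * h := by positivity
    nlinarith [hx]
  have hbound1 : (|θ| + 1) * h ≤ D := by
    have hx : 0 ≤ ((R : ℝ) + |θ| + 1) * h := by positivity
    nlinarith [hKh', hx]
  have hbound2 : ((R : ℝ) + |θ| + 1) * h ≤ D := by
    have hx : 0 ≤ (|θ| + 1) * h := by positivity
    nlinarith [hKh', hx]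
  have hIccD : Set.Icc c d ⊆ Set.Icc (xb - D) (xb + D) := by
    apply Set.Icc_subset_Icc
    · rw [hc_def]; linarith [hbound1]
    · rw [hd_def]; linarith [hbound2]
  have hsub : Set.Icc c d ⊆ Set.Ioo a b := subset_trans hIccD hsubD
  -- Taylor polynomial
  obtain ⟨T, hTdeg, hTbd⟩ := taylor_poly_bound r u a b c d M hcd hsub hu
    (fun y hy => hMb y (hIccD hy))
  obtain ⟨E, hE_def⟩ : ∃ E : ℝ,
      E = M * K ^ (r + 1) / (r.factorial : ℝ) * h ^ (r + 1) := ⟨_, rfl⟩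
  have hE : 0 ≤ E := by
    rw [hE_def]
    apply mul_nonneg (div_nonneg (mul_nonneg hM (by positivity)) (by positivity)) (by positivity)
  have hTb : ∀ x ∈ Set.Icc c d, x - c ≤ K * h → |u x - T.eval x| ≤ E := by
    intro x hx hxc
    have hxc0 : 0 ≤ x - c := by linarith [hx.1]
    calc |u x - T.eval x| ≤ M * (x - c) ^ (r + 1) / (r.factorial : ℝ) := hTbd x hx
      _ ≤ M * (K * h) ^ (r + 1) / (r.factorial : ℝ) := by gcongr
      _ = M * K ^ (r + 1) / (r.factorial : ℝ) * h ^ (r + 1) := by rw [mul_pow]; ring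
      _ = E := hE_def.symm
  -- the stencil nodes lie in Icc c d within distance K*h of c
  have hnode : ∀ j : ℕ, j ≤ R → stencil xb h j ∈ Set.Icc c d ∧ stencil xb h j - c ≤ K * h := by
    intro j hj
    have hjR : (j : ℝ) ≤ (R : ℝ) := Nat.cast_le.mpr hj
    have hj0 : (0:ℝ) ≤ (j : ℝ) := Nat.cast_nonneg j
    have hx1 : 0 ≤ ((j : ℝ) + |θ| + 1) * h := by positivity
    have hx2 : 0 ≤ ((R : ℝ) - (j : ℝ) + |θ| + 1) * h := mul_nonneg (by linarith) hh.le
    refine ⟨⟨?_, ?_⟩, ?_⟩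
    · rw [hc_def]; unfold stencil; nlinarith [hx1]
    · rw [hd_def]; unfold stencil; nlinarith [hx2]
    · rw [hc_def, hK_def]; unfold stencil; nlinarith [hx2]
  have htmem : (xb + θ * h) ∈ Set.Icc c d ∧ (xb + θ * h) - c ≤ K * h := by
    have hx1 : 0 ≤ (θ + |θ| + 1) * h := mul_nonneg (by linarith) hh.le
    have hx2 : 0 ≤ ((R : ℝ) + |θ| - θ + 1) * h := mul_nonneg (by linarith) hh.le
    refine ⟨⟨?_, ?_⟩, ?_⟩
    · rw [hc_def]; nlinarith [hx1]
    · rw [hd_def]; nlinarith [hx2]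
    · rw [hc_def, hK_def]; nlinarith [hx2]
  -- nodal bound for T
  have hTnode : ∀ j ∈ Finset.range (R + 1), |T.eval (stencil xb h j) - u (stencil xb h j)| ≤ E := by
    intro j hj
    have hj' : j ≤ R := Nat.lt_succ_iff.mp (Finset.mem_range.mp hj)
    rw [abs_sub_comm]
    exact hTb _ (hnode j hj').1 (hnode j hj').2
  -- nodal bound for p via least squares
  have hpnode := lsq_nodal_bound r R (stencil xb h) u p T E hE (hp.2 T hTdeg) hTnode
  -- nodal bound for v = p - T on the first r+1 nodes
  have hvnode : ∀ j ∈ Finset.range (r + 1),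
      |(p - T).eval (stencil xb h j)| ≤ ((R : ℝ) + 2) * E := by
    intro j hj
    have hjR : j ≤ R := le_trans (Nat.lt_succ_iff.mp (Finset.mem_range.mp hj)) hrR
    have hjmem : j ∈ Finset.range (R + 1) := Finset.mem_range.mpr (Nat.lt_succ_iff.mpr hjR)
    have h1 := hpnode j hjmem
    have h2 := hTnode j hjmem
    rw [Polynomial.eval_sub]
    calc |p.eval (stencil xb h j) - T.eval (stencil xb h j)|
        = |(p.eval (stencil xb h j) - u (stencil xb h j))
            - (T.eval (stencil xb h j) - u (stencil xb h j))| := by ring_nf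
      _ ≤ |p.eval (stencil xb h j) - u (stencil xb h j)|
            + |T.eval (stencil xb h j) - u (stencil xb h j)| := abs_sub _ _
      _ ≤ ((R : ℝ) + 1) * E + E := by linarith
      _ = ((R : ℝ) + 2) * E := by ring
  have hvdeg : (p - T).natDegree ≤ r :=
    le_trans (Polynomial.natDegree_sub_le _ _) (max_le hp.1 hTdeg)
  have hvt := lagrange_stencil_bound r θ xb h (((R : ℝ) + 2) * E) hh (by positivity)
    (p - T) hvdeg hvnode
  -- final assembly
  have h2 : |T.eval (xb + θ * h) - u (xb + θ * h)| ≤ E := by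
    rw [abs_sub_comm]; exact hTb _ htmem.1 htmem.2
  have hsplit : p.eval (xb + θ * h) - u (xb + θ * h)
      = (p - T).eval (xb + θ * h) + (T.eval (xb + θ * h) - u (xb + θ * h)) := by
    rw [Polynomial.eval_sub]; ring
  have hh1 : (0:ℝ) ≤ h ^ (r + 1) := by positivity
  calc |p.eval (xb + θ * h) - u (xb + θ * h)|
      = |(p - T).eval (xb + θ * h) + (T.eval (xb + θ * h) - u (xb + θ * h))| := by rw [hsplit]
    _ ≤ |(p - T).eval (xb + θ * h)| + |T.eval (xb + θ * h) - u (xb + θ * h)| := abs_add_le _ _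
    _ ≤ LebConst r θ * (((R : ℝ) + 2) * E) + E := by linarith
    _ = (LebConst r θ * ((R : ℝ) + 2) + 1) * E := by ring
    _ = (LebConst r θ * ((R : ℝ) + 2) + 1)
          * (M * K ^ (r + 1) / (r.factorial : ℝ)) * h ^ (r + 1) := by rw [hE_def]; ring
    _ ≤ C * h ^ (r + 1) := by
        apply mul_le_mul_of_nonneg_right _ hh1
        rw [hC_def]; linarith
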